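/- For constants c_k ≥ 0 indexed by the neighbors k of the optimal arm k*, the constraint inf_{λ ∈ B_k(θ)} Σ_{l ≠ k*} c_l·KL(θ_l, λ_l) ≥ 1 is equivalent to c_k·I_min(θ_k, μ(θ_{k*})) ≥ 1; in particular inf_{λ ∈ B_k(θ)} Σ_{l ≠ k*} c_l·KL(θ_l, λ_l) = c_k·I_min(θ_k, μ(θ_{k*})). -/

import Mathlib

theorem stmt_14 {K : ℕ} (μf : ℝ → ℝ) (KL : ℝ → ℝ → ℝ)
    (hKLnn : ∀ a b, 0 ≤ KL a b) (hKLself : ∀ a, KL a a = 0)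
    (θ : Fin K → ℝ) (kstar k : Fin K) (hk : k ≠ kstar)
    (c : Fin K → ℝ) (hc : ∀ l, 0 ≤ c l)
    (ΘG : Set (Fin K → ℝ))
    (hupdate : ∀ x : ℝ, μf (θ kstar) < μf x → Function.update θ k x ∈ ΘG)
    (Bk : Set (Fin K → ℝ))
    (hBk : Bk = {lam | lam ∈ ΘG ∧ lam kstar = θ kstar ∧ μf (lam kstar) < μf (lam k)})
    (hcont : ∀ ε > (0 : ℝ), ∃ x, μf (θ kstar) < μf x ∧
      KL (θ k) x ≤ sInf {v | ∃ x', μf (θ kstar) ≤ μf x' ∧ v = KL (θ k) x'} + ε) :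
    sInf {v | ∃ lam ∈ Bk, v = ∑ l ∈ Finset.univ.erase kstar, c l * KL (θ l) (lam l)}
        = c k * sInf {v | ∃ x, μf (θ kstar) ≤ μf x ∧ v = KL (θ k) x} ∧
    ((∀ lam ∈ Bk, 1 ≤ ∑ l ∈ Finset.univ.erase kstar, c l * KL (θ l) (lam l)) ↔
      1 ≤ c k * sInf {v | ∃ x, μf (θ kstar) ≤ μf x ∧ v = KL (θ k) x}) := by
  set S : Set ℝ := {v | ∃ x, μf (θ kstar) ≤ μf x ∧ v = KL (θ k) x} with hS
  set T : Set ℝ := {v | ∃ lam ∈ Bk, v = ∑ l ∈ Finset.univ.erase kstar, c l * KL (θ l) (lam l)} with hT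
  have hSbdd : BddBelow S := by
    refine ⟨0, fun v hv => ?_⟩
    obtain ⟨x, _, rfl⟩ := hv
    exact hKLnn _ _
  have hSne : S.Nonempty := by
    obtain ⟨x, hx, _⟩ := hcont 1 one_pos
    exact ⟨KL (θ k) x, x, le_of_lt hx, rfl⟩
  have hTbdd : BddBelow T := by
    refine ⟨0, fun v hv => ?_⟩
    obtain ⟨lam, _, rfl⟩ := hv
    exact Finset.sum_nonneg fun l _ => mul_nonneg (hc l) (hKLnn _ _)
  -- key lower bound for each lam in Bk
  have hkmem : k ∈ Finset.univ.erase kstar := Finset.mem_erase.mpr ⟨hk, Finset.mem_univ k⟩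
  have hlow : ∀ lam ∈ Bk, c k * sInf S ≤ ∑ l ∈ Finset.univ.erase kstar, c l * KL (θ l) (lam l) := by
    intro lam hlam
    rw [hBk] at hlam
    obtain ⟨_, hlk, hlt⟩ := hlam
    have hmem : KL (θ k) (lam k) ∈ S := ⟨lam k, by rw [← hlk]; exact le_of_lt hlt, rfl⟩
    calc c k * sInf S ≤ c k * KL (θ k) (lam k) :=
          mul_le_mul_of_nonneg_left (csInf_le hSbdd hmem) (hc k)
      _ ≤ ∑ l ∈ Finset.univ.erase kstar, c l * KL (θ l) (lam l) :=
          Finset.single_le_sum (fun l _ => mul_nonneg (hc l) (hKLnn _ _)) hkmem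
  -- for each ε>0, an element of T close to c k * sInf S
  have hup : ∀ ε > (0 : ℝ), ∃ v ∈ T, v ≤ c k * sInf S + ε := by
    intro ε hε
    have hε' : ε / (c k + 1) > 0 := div_pos hε (by linarith [hc k])
    obtain ⟨x, hx, hxle⟩ := hcont _ hε'
    set lam := Function.update θ k x with hlam
    have hmemBk : lam ∈ Bk := by
      rw [hBk]
      refine ⟨hupdate x hx, ?_, ?_⟩
      · exact Function.update_of_ne (Ne.symm hk) x θ
      · simpa [hlam, Function.update_of_ne (Ne.symm hk)] using hx
    have hsum : ∑ l ∈ Finset.univ.erase kstar, c l * KL (θ l) (lam l) = c k * KL (θ k) x := by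
      rw [Finset.sum_eq_single_of_mem k hkmem]
      · rw [hlam, Function.update_self]
      · intro l _ hlk
        rw [hlam, Function.update_of_ne hlk, hKLself, mul_zero]
    refine ⟨_, ⟨lam, hmemBk, rfl⟩, ?_⟩
    rw [hsum]
    have h1 : c k * KL (θ k) x ≤ c k * (sInf S + ε / (c k + 1)) :=
      mul_le_mul_of_nonneg_left hxle (hc k)
    have h2 : c k * (ε / (c k + 1)) ≤ ε := by
      rw [mul_div_assoc'] at *
      rw [div_le_iff₀ (by linarith [hc k])]
      nlinarith [hc k]
    nlinarith
  have hTne : T.Nonempty := by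
    obtain ⟨v, hv, _⟩ := hup 1 one_pos
    exact ⟨v, hv⟩
  have heq : sInf T = c k * sInf S := by
    apply le_antisymm
    · refine le_of_forall_pos_le_add fun ε hε => ?_
      obtain ⟨v, hv, hvle⟩ := hup ε hε
      exact le_trans (csInf_le hTbdd hv) hvle
    · apply le_csInf hTne
      rintro v ⟨lam, hlam, rfl⟩
      exact hlow lam hlam
  refine ⟨heq, ?_, ?_⟩
  · intro h
    rw [← heq]
    apply le_csInf hTne
    rintro v ⟨lam, hlam, rfl⟩
    exact h lam hlam
  · intro h lam hlam
    exact le_trans h (hlow lam hlam)
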